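/- Let A be a (not necessarily unital) associative ring. Then A is a domain — i.e., for all a, b ∈ A with a ≠ 0 and b ≠ 0, there exist x in the two-sided ideal generated by a and y in the two-sided ideal generated by b with x * y ≠ 0 or y * x ≠ 0 — if and only if A is anticommutative, meaning: (1) for every two-sided ideal I of A with I ≠ ⊥ there exist x, y ∈ I with x * y ≠ 0 (no nonzero ideal with zero multiplication), and (2) for all two-sided ideals I, J of A with I ≠ ⊥ and J ≠ ⊥, I ⊓ J ≠ ⊥. -/
import Mathlib

private lemma ne_bot_iff' {A : Type*} [NonUnitalRing A] (I : TwoSidedIdeal A) :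
    I ≠ ⊥ ↔ ∃ x ∈ I, x ≠ 0 := by
  constructor
  · intro h
    by_contra hc
    push_neg at hc
    exact h (le_antisymm (fun x hx => (TwoSidedIdeal.mem_bot _).2 (hc x hx))
      (fun x hx => by rw [(TwoSidedIdeal.mem_bot _)] at hx; simp [hx]))
  · rintro ⟨x, hx, hx0⟩ rfl
    exact hx0 ((TwoSidedIdeal.mem_bot _).1 hx)

theorem nonunital_ring_domain_iff_anticommutative
    (A : Type*) [NonUnitalRing A] :
    (∀ a b : A, a ≠ 0 → b ≠ 0 →
      ∃ x ∈ TwoSidedIdeal.span {a}, ∃ y ∈ TwoSidedIdeal.span {b},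
        x * y ≠ 0 ∨ y * x ≠ 0) ↔
    ((∀ I : TwoSidedIdeal A, I ≠ ⊥ → ∃ x ∈ I, ∃ y ∈ I, x * y ≠ 0) ∧
      (∀ I J : TwoSidedIdeal A, I ≠ ⊥ → J ≠ ⊥ → I ⊓ J ≠ ⊥)) := by
  constructor
  · intro hD
    constructor
    · intro I hI
      obtain ⟨a, haI, ha⟩ := (ne_bot_iff' I).1 hI
      obtain ⟨x, hx, y, hy, hxy⟩ := hD a a ha ha
      have hsub : TwoSidedIdeal.span {a} ≤ I :=
        fun z hz => TwoSidedIdeal.mem_span_iff.1 hz I (by simpa using haI)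
      rcases hxy with h | h
      · exact ⟨x, hsub hx, y, hsub hy, h⟩
      · exact ⟨y, hsub hy, x, hsub hx, h⟩
    · intro I J hI hJ
      obtain ⟨a, haI, ha⟩ := (ne_bot_iff' I).1 hI
      obtain ⟨b, hbJ, hb⟩ := (ne_bot_iff' J).1 hJ
      obtain ⟨x, hx, y, hy, hxy⟩ := hD a b ha hb
      have hxI : x ∈ I := TwoSidedIdeal.mem_span_iff.1 hx I (by simpa using haI)
      have hyJ : y ∈ J := TwoSidedIdeal.mem_span_iff.1 hy J (by simpa using hbJ)
      rw [ne_bot_iff']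
      rcases hxy with h | h
      · exact ⟨x * y, (TwoSidedIdeal.mem_inf _).2 ⟨I.mul_mem_right _ _ hxI,
          J.mul_mem_left _ _ hyJ⟩, h⟩
      · exact ⟨y * x, (TwoSidedIdeal.mem_inf _).2 ⟨I.mul_mem_left _ _ hxI,
          J.mul_mem_right _ _ hyJ⟩, h⟩
  · rintro ⟨h1, h2⟩ a b ha hb
    have hIa : TwoSidedIdeal.span {a} ≠ ⊥ :=
      (ne_bot_iff' _).2 ⟨a, TwoSidedIdeal.subset_span rfl, ha⟩
    have hIb : TwoSidedIdeal.span {b} ≠ ⊥ :=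
      (ne_bot_iff' _).2 ⟨b, TwoSidedIdeal.subset_span rfl, hb⟩
    obtain ⟨x, hx, y, hy, hxy⟩ := h1 _ (h2 _ _ hIa hIb)
    exact ⟨x, ((TwoSidedIdeal.mem_inf _).1 hx).1, y, ((TwoSidedIdeal.mem_inf _).1 hy).2,
      Or.inl hxy⟩
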